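/- Let A ⊆ ℕ. Then the decoding oracle d_{H₀^A ⊗ H₁^A, H₁^A ⊗ H₀^A} is T1-equivalent to the decoding oracle d_{H₀^A, H₁^A}: each is T1-reducible to the other. -/

import Mathlib

open Classical in
/-- The oracle game: the list of previous answers by Merlin up to stage `i`,
for the answer sequence `s`. -/
def prefixList (s : ℕ → ℕ) (i : ℕ) : List ℕ := List.ofFn (fun j : Fin i => s j)

/-- A winning Arthur+Nimue strategy for the reduction game of the basic oracle `ℱ`
to the basic oracle `𝒢`. -/
def Winning (ℱ 𝒢 : Set (Set ℕ)) (σ : List ℕ →. Option ℕ) (ν : Set ℕ → List ℕ → Set ℕ) : Prop :=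
  (∀ F ∈ ℱ, ∀ l : List ℕ, ν F l ∈ 𝒢) ∧
  ∀ F ∈ ℱ, ∀ s : ℕ → ℕ, (∀ i, s i ∈ ν F (prefixList s i)) →
    ∃ k, (∀ i ≤ k, (σ (prefixList s i)).Dom) ∧
      (∀ i < k, none ∈ σ (prefixList s i)) ∧
      ∃ u ∈ F, some u ∈ σ (prefixList s k)

/-- The encoding of an Arthur strategy as a partial function `ℕ →. ℕ`, via the
standard Mathlib encodings of `List ℕ` and `Option ℕ`. -/
def arthurCode (σ : List ℕ →. Option ℕ) : ℕ →. ℕ :=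
  fun n => (σ (Denumerable.ofNat (List ℕ) n)).map Encodable.encode

open Classical in
/-- The decoding oracle associated to the promise problem `(P, Q)`: value `0` on `P`,
value `1` on `Q`, undefined elsewhere. -/
noncomputable def dOracle (P Q : Set ℕ) : ℕ →. ℕ :=
  fun n => ⟨n ∈ P ∪ Q, fun _ => if n ∈ Q then 1 else 0⟩

open Classical in
/-- The characteristic function of a set of naturals. -/
noncomputable def chi (A : Set ℕ) : ℕ → ℕ := fun n => if n ∈ A then 1 else 0

/-- The coded cartesian product of two sets of naturals. -/
def tensor (P Q : Set ℕ) : Set ℕ := {x | ∃ p ∈ P, ∃ q ∈ Q, x = Nat.pair p q}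

infixl:70 " ⊗ " => tensor

/-- Oracle computability, as in Mathlib's `Nat.RecursiveIn`. -/
inductive Nat.RecursiveIn' (g : ℕ →. ℕ) : (ℕ →. ℕ) → Prop
  | zero : Nat.RecursiveIn' g fun _ => 0
  | succ : Nat.RecursiveIn' g Nat.succ
  | left : Nat.RecursiveIn' g fun n => (Nat.unpair n).1
  | right : Nat.RecursiveIn' g fun n => (Nat.unpair n).2
  | oracle : Nat.RecursiveIn' g g
  | pair {f h : ℕ →. ℕ} (hf : Nat.RecursiveIn' g f) (hh : Nat.RecursiveIn' g h) :
      Nat.RecursiveIn' g fun n => (Nat.pair <$> f n <*> h n)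
  | comp {f h : ℕ →. ℕ} (hf : Nat.RecursiveIn' g f) (hh : Nat.RecursiveIn' g h) :
      Nat.RecursiveIn' g fun n => h n >>= f
  | prec {f h : ℕ →. ℕ} (hf : Nat.RecursiveIn' g f) (hh : Nat.RecursiveIn' g h) :
      Nat.RecursiveIn' g
        (Nat.unpaired fun a n =>
          n.rec (f a) fun y IH => do
            let i ← IH
            h (Nat.pair a (Nat.pair y i)))
  | rfind {f : ℕ →. ℕ} (hf : Nat.RecursiveIn' g f) :
      Nat.RecursiveIn' g fun a =>
        Nat.rfind fun n => (fun m => m = 0) <$> f (Nat.pair a n)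

/-- `f` is T1-reducible to `g`: some partial function recursive in the oracle `g`
extends `f`. -/
def T1Reducible (f g : ℕ →. ℕ) : Prop :=
  ∃ h : ℕ →. ℕ, Nat.RecursiveIn' g h ∧ ∀ n : ℕ, ∀ a ∈ f n, a ∈ h n

/-- `f` is T1-computable: it has a partial computable extension. -/
def T1Computable (f : ℕ →. ℕ) : Prop :=
  ∃ h : ℕ →. ℕ, Nat.Partrec h ∧ ∀ n : ℕ, ∀ a ∈ f n, a ∈ h n

/-- Codes for oracle computations: Mathlib's `Nat.Partrec.Code` extended by an
`oracle` constructor. -/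
inductive OCode : Type
  | zero : OCode
  | succ : OCode
  | left : OCode
  | right : OCode
  | oracle : OCode
  | pair : OCode → OCode → OCode
  | comp : OCode → OCode → OCode
  | prec : OCode → OCode → OCode
  | rfind' : OCode → OCode

/-- Evaluation of an oracle code relative to the oracle `g`, by the same structural
recursion as Mathlib's `Nat.Partrec.Code.eval`. -/
def OCode.eval (g : ℕ →. ℕ) : OCode → ℕ →. ℕ
  | .zero => pure 0
  | .succ => Nat.succ
  | .left => ↑fun n : ℕ => n.unpair.1
  | .right => ↑fun n : ℕ => n.unpair.2
  | .oracle => g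
  | .pair cf cg => fun n => Nat.pair <$> cf.eval g n <*> cg.eval g n
  | .comp cf cg => fun n => cg.eval g n >>= cf.eval g
  | .prec cf cg =>
    Nat.unpaired fun a n =>
      n.rec (cf.eval g a) fun y IH => do
        let i ← IH
        cg.eval g (Nat.pair a (Nat.pair y i))
  | .rfind' cf =>
    Nat.unpaired fun a m =>
      (Nat.rfind fun n => (fun m => m = 0) <$> cf.eval g (Nat.pair a (n + m))).map (· + m)

/-- The `n`-th oracle code. -/
def OCode.ofNat : ℕ → OCode
  | 0 => .zero
  | 1 => .succ
  | 2 => .left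
  | 3 => .right
  | 4 => .oracle
  | n + 5 =>
    have h1 : (n / 4).unpair.1 < n + 5 :=
      lt_of_le_of_lt (le_trans (Nat.unpair_left_le _) (Nat.div_le_self _ _)) (by omega)
    have h2 : (n / 4).unpair.2 < n + 5 :=
      lt_of_le_of_lt (le_trans (Nat.unpair_right_le _) (Nat.div_le_self _ _)) (by omega)
    if n % 4 = 0 then .pair (OCode.ofNat (n / 4).unpair.1) (OCode.ofNat (n / 4).unpair.2)
    else if n % 4 = 1 then .comp (OCode.ofNat (n / 4).unpair.1) (OCode.ofNat (n / 4).unpair.2)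
    else if n % 4 = 2 then .prec (OCode.ofNat (n / 4).unpair.1) (OCode.ofNat (n / 4).unpair.2)
    else .rfind' (OCode.ofNat (n / 4).unpair.1)

/-- `φ_e^g`: the evaluation of the `e`-th oracle code relative to the oracle `g`. -/
def phi (g : ℕ →. ℕ) (e : ℕ) : ℕ →. ℕ := (OCode.ofNat e).eval g

/-- `H_i^A`: the set of (codes of) oracle programs which, run with the characteristic
function of `A` as oracle, halt on input `0` with output `i`. -/
def Hset (A : Set ℕ) (i : ℕ) : Set ℕ := {e : ℕ | (i : ℕ) ∈ phi (chi A) e 0}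


open Classical

lemma pfun_pure_eq (a n : ℕ) : (pure a : ℕ →. ℕ) n = Part.some a := rfl

lemma ofNat_comp' (a b : ℕ) : OCode.ofNat (4 * Nat.pair a b + 6) = .comp (.ofNat a) (.ofNat b) := by
  have : 4 * Nat.pair a b + 6 = (4 * Nat.pair a b + 1) + 5 := by omega
  rw [this, OCode.ofNat]
  simp [Nat.mul_add_mod, Nat.mul_add_div]

lemma ofNat_prec' (a b : ℕ) : OCode.ofNat (4 * Nat.pair a b + 7) = .prec (.ofNat a) (.ofNat b) := by
  have : 4 * Nat.pair a b + 7 = (4 * Nat.pair a b + 2) + 5 := by omega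
  rw [this, OCode.ofNat]
  simp [Nat.mul_add_mod, Nat.mul_add_div]

/-- code for a function with f 0 = 1, f 1 = 0 -/
def flipC : OCode := .prec (.comp .succ .zero) .zero

lemma flip_eval0 (g : ℕ →. ℕ) : (1:ℕ) ∈ flipC.eval g 0 := by
  simp [flipC, OCode.eval, Nat.unpaired, pfun_pure_eq]
  exact Part.mem_bind (Part.mem_some 0) (Part.mem_some 1)

lemma flip_eval1 (g : ℕ →. ℕ) : (0:ℕ) ∈ flipC.eval g 1 := by
  have h1 : Nat.unpair 1 = (0, 1) := rfl
  simp [flipC, OCode.eval, Nat.unpaired, h1, Part.mem_bind_iff, pfun_pure_eq]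
  exact ⟨1, Part.mem_bind (Part.mem_some 0) (Part.mem_some 1)⟩

lemma mem_dOracle {P Q : Set ℕ} {n a : ℕ} :
    a ∈ dOracle P Q n ↔ (n ∈ P ∪ Q) ∧ a = if n ∈ Q then 1 else 0 := by
  constructor
  · rintro ⟨h, rfl⟩; exact ⟨h, rfl⟩
  · rintro ⟨h, rfl⟩; exact ⟨h, rfl⟩

lemma zero_mem_H (A : Set ℕ) : 0 ∈ Hset A 0 := by
  simp [Hset, phi, OCode.ofNat, OCode.eval, pfun_pure_eq]

lemma fourteen_mem_H (A : Set ℕ) : 14 ∈ Hset A 1 := by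
  have : (14:ℕ) = 4 * Nat.pair 1 0 + 6 := rfl
  rw [Hset]
  show (1:ℕ) ∈ phi (chi A) 14 0
  rw [phi, this, ofNat_comp']
  show (1:ℕ) ∈ (OCode.comp (.ofNat 1) (.ofNat 0)).eval (chi A) 0
  have h1 : OCode.ofNat 1 = .succ := by simp [OCode.ofNat]
  have h0 : OCode.ofNat 0 = .zero := by simp [OCode.ofNat]
  simp [h1, h0, OCode.eval, Part.mem_bind_iff, pfun_pure_eq]
  exact Part.mem_bind (Part.mem_some 0) (Part.mem_some 1)

lemma H_disjoint (A : Set ℕ) {n : ℕ} (h0 : n ∈ Hset A 0) (h1 : n ∈ Hset A 1) : False := by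
  have := Part.mem_unique h0 h1; simp at this

lemma partrec_recursiveIn {g f : ℕ →. ℕ} (h : Nat.Partrec f) : Nat.RecursiveIn' g f := by
  induction h with
  | zero => exact .zero
  | succ => exact .succ
  | left => exact .left
  | right => exact .right
  | pair _ _ ihf ihh => exact .pair ihf ihh
  | comp _ _ ihf ihh => exact .comp ihf ihh
  | prec _ _ ihf ihh => exact .prec ihf ihh
  | rfind _ ihf => exact .rfind ihf

def Fnum : ℕ := 4 * Nat.pair (4 * Nat.pair 1 0 + 6) 0 + 7

lemma ofNat_F : OCode.ofNat Fnum = flipC := by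
  rw [Fnum, ofNat_prec', ofNat_comp']
  have h1 : OCode.ofNat 1 = .succ := by simp [OCode.ofNat]
  have h0 : OCode.ofNat 0 = .zero := by simp [OCode.ofNat]
  rw [h1, h0, flipC]

/-- the flipped code: on input 0, computes 1 - φ_n(0) -/
def eflip (n : ℕ) : ℕ := 4 * Nat.pair Fnum n + 6

lemma eflip_mem_H1 {A : Set ℕ} {n : ℕ} (h : n ∈ Hset A 0) : eflip n ∈ Hset A 1 := by
  rw [Hset]
  show (1:ℕ) ∈ phi (chi A) (eflip n) 0
  rw [phi, eflip, ofNat_comp', ofNat_F]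
  exact Part.mem_bind_iff.2 ⟨0, h, flip_eval0 _⟩

lemma eflip_mem_H0 {A : Set ℕ} {n : ℕ} (h : n ∈ Hset A 1) : eflip n ∈ Hset A 0 := by
  rw [Hset]
  show (0:ℕ) ∈ phi (chi A) (eflip n) 0
  rw [phi, eflip, ofNat_comp', ofNat_F]
  exact Part.mem_bind_iff.2 ⟨1, h, flip_eval1 _⟩

def query (n : ℕ) : ℕ := Nat.pair n (eflip n)

lemma query_partrec : Nat.Partrec (fun n => Part.some (query n)) := by
  have hc : Computable (fun n : ℕ => query n) := by
    have : Primrec (fun n : ℕ => query n) := by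
      unfold query eflip
      exact Primrec₂.natPair.comp Primrec.id
        (Primrec.nat_add.comp
          (Primrec.nat_mul.comp (Primrec.const 4)
            (Primrec₂.natPair.comp (Primrec.const Fnum) Primrec.id)) (Primrec.const 6))
    exact this.to_comp
  have := hc.partrec
  rwa [Partrec.nat_iff] at this

theorem stmt15 (A : Set ℕ) :
    T1Reducible (dOracle (Hset A 0 ⊗ Hset A 1) (Hset A 1 ⊗ Hset A 0))
        (dOracle (Hset A 0) (Hset A 1)) ∧
      T1Reducible (dOracle (Hset A 0) (Hset A 1))
        (dOracle (Hset A 0 ⊗ Hset A 1) (Hset A 1 ⊗ Hset A 0)) := by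
  set H0 := Hset A 0 with hH0
  set H1 := Hset A 1 with hH1
  constructor
  · refine ⟨_, Nat.RecursiveIn'.comp .oracle .left, ?_⟩
    intro n a ha
    rw [mem_dOracle] at ha
    obtain ⟨hn, rfl⟩ := ha
    simp only [Part.coe_some, Part.bind_eq_bind, Part.bind_some]
    refine Part.mem_bind (Part.mem_some _) ?_
    rcases hn with h | h
    · obtain ⟨p, hp, q, hq, rfl⟩ := h
      have hnot : Nat.pair p q ∉ H1 ⊗ H0 := by
        rintro ⟨p', hp', q', hq', heq⟩
        obtain ⟨rfl, rfl⟩ := Nat.pair_eq_pair.1 heq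
        exact H_disjoint A hp hp'
      rw [if_neg hnot, mem_dOracle, Nat.unpair_pair]
      exact ⟨Or.inl hp, by rw [if_neg (fun h => H_disjoint A hp h)]⟩
    · obtain ⟨p, hp, q, hq, rfl⟩ := h
      have hyes : Nat.pair p q ∈ H1 ⊗ H0 := ⟨p, hp, q, hq, rfl⟩
      rw [if_pos hyes, mem_dOracle, Nat.unpair_pair]
      exact ⟨Or.inr hp, by rw [if_pos hp]⟩
  · refine ⟨_, Nat.RecursiveIn'.comp .oracle (partrec_recursiveIn query_partrec), ?_⟩
    intro n a ha
    rw [mem_dOracle] at ha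
    obtain ⟨hn, rfl⟩ := ha
    refine Part.mem_bind (Part.mem_some _) ?_
    rcases hn with h | h
    · have hq : eflip n ∈ H1 := eflip_mem_H1 h
      have hmem : query n ∈ H0 ⊗ H1 := ⟨n, h, eflip n, hq, rfl⟩
      have hnot : query n ∉ H1 ⊗ H0 := by
        rintro ⟨p', hp', q', hq', heq⟩
        obtain ⟨rfl, rfl⟩ := Nat.pair_eq_pair.1 heq
        exact H_disjoint A h hp'
      rw [if_neg (fun hh => H_disjoint A h hh), mem_dOracle]
      exact ⟨Or.inl hmem, by rw [if_neg hnot]⟩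
    · have hq : eflip n ∈ H0 := eflip_mem_H0 h
      have hmem : query n ∈ H1 ⊗ H0 := ⟨n, h, eflip n, hq, rfl⟩
      rw [if_pos h, mem_dOracle]
      exact ⟨Or.inr hmem, by rw [if_pos hmem]⟩
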